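/- Let L > 0, μ > 0, D > 0 and σ₁ᶜ, σ₂ᶜ > 0, and set R₃ := −σ₁ᶜ, S₃ := −σ₂ᶜ. Let σ ∈ C²(ℝ) be strictly decreasing. Suppose f, g ∈ C⁴([0,L]) and Γ ∈ C²([0,L]) are strictly positive functions which form a steady state of the capillary-driven system (C), i.e. the x-derivatives of the three fluxes ∂ₓ[f((R₃f²/3)∂ₓ³f + S₃μ(f²/3 + fg/2)∂ₓ³(f+g) − μ(f/2)∂ₓ(σ∘Γ))], ∂ₓ[g((R₃f²/2)∂ₓ³f + S₃(g²/3 + μ(f²/2 + fg))∂ₓ³(f+g) − (μf + g/2)∂ₓ(σ∘Γ))] and ∂ₓ[Γ((R₃f²/2)∂ₓ³f + S₃(g²/2 + μ(f²/2 + fg))∂ₓ³(f+g) − (μf + g)∂ₓ(σ∘Γ)) + D∂ₓΓ] all vanish identically on (0,L), and ∂ₓf = ∂ₓg = ∂ₓΓ = 0 as well as ∂ₓ³f = ∂ₓ³g = 0 at x = 0 and x = L. Then f, g and Γ are constant on [0,L]. -/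

import Mathlib

open Set Filter Topology

lemma icc_eventuallyEq_ioo {a b x : ℝ} (hx : x ∈ Ioo a b) :
    (Icc a b : Set ℝ) =ᶠ[𝓝 x] (Ioo a b : Set ℝ) := by
  have h : Ioo a b ∈ 𝓝 x := isOpen_Ioo.mem_nhds hx
  rw [Filter.eventuallyEq_set]
  filter_upwards [h] with y hy
  simp [le_of_lt hy.1, le_of_lt hy.2, hy.1, hy.2]

lemma univ_eventuallyEq_icc {a b x : ℝ} (hx : x ∈ Ioo a b) :
    (univ : Set ℝ) =ᶠ[𝓝 x] (Icc a b : Set ℝ) := by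
  have h : Ioo a b ∈ 𝓝 x := isOpen_Ioo.mem_nhds hx
  rw [Filter.eventuallyEq_set]
  filter_upwards [h] with y hy
  simp [le_of_lt hy.1, le_of_lt hy.2]

lemma iteratedDerivWithin_congr_set' {n : ℕ} {f : ℝ → ℝ} {s t : Set ℝ} {x : ℝ}
    (h : s =ᶠ[𝓝 x] t) : iteratedDerivWithin n f s x = iteratedDerivWithin n f t x := by
  simp only [iteratedDerivWithin_eq_iteratedFDerivWithin, iteratedFDerivWithin_congr_set h]

lemma itdw_eq_itd {a b x : ℝ} (hx : x ∈ Ioo a b) (n : ℕ) (f : ℝ → ℝ) :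
    iteratedDerivWithin n f (Icc a b) x = iteratedDeriv n f x := by
  rw [← iteratedDerivWithin_univ, iteratedDerivWithin_congr_set'
    (univ_eventuallyEq_icc hx).symm]

lemma hasDerivAt_itdw {a b x : ℝ} (hx : x ∈ Ioo a b) {F : ℝ → ℝ} {N k : ℕ}
    (hF : ContDiffOn ℝ N F (Icc a b)) (hk : k + 1 ≤ N) :
    HasDerivAt (iteratedDerivWithin k F (Icc a b))
      (iteratedDerivWithin (k + 1) F (Icc a b) x) x := by
  have hFt : ContDiffOn ℝ N F (Ioo a b) := hF.mono Ioo_subset_Icc_self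
  have hkN : (k : WithTop ℕ∞) < N := by exact_mod_cast Nat.lt_of_succ_le hk
  have hdiff : DifferentiableOn ℝ (iteratedDerivWithin k F (Ioo a b)) (Ioo a b) :=
    hFt.differentiableOn_iteratedDerivWithin hkN isOpen_Ioo.uniqueDiffOn
  have hda : DifferentiableAt ℝ (iteratedDerivWithin k F (Ioo a b)) x :=
    hdiff.differentiableAt (isOpen_Ioo.mem_nhds hx)
  have h1 : HasDerivAt (iteratedDerivWithin k F (Ioo a b))
      (iteratedDerivWithin (k + 1) F (Ioo a b) x) x := by
    have h := hda.hasDerivAt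
    rwa [← derivWithin_of_isOpen isOpen_Ioo hx,
      ← iteratedDerivWithin_succ] at h
  have h2 : iteratedDerivWithin (k + 1) F (Ioo a b) x
      = iteratedDerivWithin (k + 1) F (Icc a b) x :=
    (iteratedDerivWithin_congr_set' (icc_eventuallyEq_ioo hx)).symm
  rw [h2] at h1
  refine h1.congr_of_eventuallyEq ?_
  filter_upwards [isOpen_Ioo.mem_nhds hx] with y hy
  exact iteratedDerivWithin_congr_set' (icc_eventuallyEq_ioo hy)

lemma hasDerivAt_dw {a b x : ℝ} (hx : x ∈ Ioo a b) {F : ℝ → ℝ} {N : ℕ}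
    (hF : ContDiffOn ℝ N F (Icc a b)) (hN : 2 ≤ N) :
    HasDerivAt (derivWithin F (Icc a b)) (iteratedDerivWithin 2 F (Icc a b) x) x := by
  have hab : a < b := hx.1.trans hx.2
  have h := hasDerivAt_itdw hx hF hN
  refine h.congr_of_eventuallyEq ?_
  filter_upwards [isOpen_Ioo.mem_nhds hx] with y hy
  exact (congrFun iteratedDerivWithin_one y).symm

lemma const_on_Icc {a b : ℝ} (hab : a < b) {h : ℝ → ℝ} (hc : ContinuousOn h (Icc a b))
    (hd : ∀ x ∈ Ioo a b, HasDerivAt h 0 x) : ∀ x ∈ Icc a b, h x = h a := by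
  have key : ∀ x ∈ Ioo a b, ∀ y ∈ Ioo a b, x ≤ y → h y = h x := by
    intro x hx y hy hxy
    have hsub : Icc x y ⊆ Icc a b := Icc_subset_Icc hx.1.le hy.2.le
    exact constant_of_has_deriv_right_zero (hc.mono hsub)
      (fun t ht => (hd t ⟨lt_of_lt_of_le hx.1 ht.1, lt_trans ht.2 hy.2⟩).hasDerivWithinAt)
      y (right_mem_Icc.2 hxy)
  have hm : (a + b) / 2 ∈ Ioo a b := ⟨by linarith, by linarith⟩
  have hIoo : ∀ x ∈ Ioo a b, h x = h ((a + b) / 2) := by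
    intro x hx
    rcases le_total x ((a + b) / 2) with hle | hle
    · exact (key x hx _ hm hle).symm
    · exact key _ hm x hx hle
  have hlim : ∀ c ∈ Icc a b, h c = h ((a + b) / 2) := by
    intro c hcmem
    have hcl : c ∈ closure (Ioo a b) := by
      rw [closure_Ioo hab.ne]; exact hcmem
    have hne : (𝓝[Ioo a b] c).NeBot := mem_closure_iff_nhdsWithin_neBot.1 hcl
    have h1 : Tendsto h (𝓝[Ioo a b] c) (𝓝 (h c)) :=
      (hc c hcmem).mono_left (nhdsWithin_mono _ Ioo_subset_Icc_self)
    have h2 : Tendsto h (𝓝[Ioo a b] c) (𝓝 (h ((a + b) / 2))) := by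
      refine Tendsto.congr' ?_ tendsto_const_nhds
      filter_upwards [self_mem_nhdsWithin] with y hy
      exact (hIoo y hy).symm
    exact tendsto_nhds_unique h1 h2
  intro x hx
  rw [hlim x hx, hlim a (left_mem_Icc.2 hab.le)]

/-- The derivative of an antitone function is nonpositive. -/
lemma deriv_nonpos_of_antitone {σ : ℝ → ℝ} (hσ : Antitone σ) {y d : ℝ}
    (hd : HasDerivAt σ d y) : d ≤ 0 := by
  have hslope : Tendsto (slope σ y) (𝓝[>] y) (𝓝 d) :=
    (hasDerivAt_iff_tendsto_slope.1 hd).mono_left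
      (nhdsWithin_mono _ (fun z hz => ne_of_gt hz))
  refine le_of_tendsto hslope ?_
  filter_upwards [self_mem_nhdsWithin] with z hz
  have hz' : y < z := hz
  have : σ z ≤ σ y := hσ hz'.le
  rw [slope_def_field]
  exact div_nonpos_of_nonpos_of_nonneg (by linarith) (by linarith)

lemma const_of_derivWithin_zero' {a b : ℝ} (hab : a < b) {F : ℝ → ℝ} {N : ℕ}
    (hF : ContDiffOn ℝ N F (Icc a b)) (hN : 1 ≤ N)
    (hz : ∀ x ∈ Ioo a b, derivWithin F (Icc a b) x = 0) :
    ∀ x ∈ Icc a b, F x = F a := by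
  apply const_on_Icc hab hF.continuousOn
  intro x hx
  have hmem : Icc a b ∈ 𝓝 x := Icc_mem_nhds hx.1 hx.2
  have hdiff : DifferentiableAt ℝ F x :=
    (hF.differentiableOn (by exact_mod_cast (Nat.one_le_iff_ne_zero.mp hN))).differentiableAt hmem
  have h := hdiff.hasDerivAt
  rwa [← derivWithin_of_mem_nhds hmem, hz x hx] at h

lemma cubic_zero {a b : ℝ} (hab : a < b) {F : ℝ → ℝ}
    (hF : ContDiffOn ℝ (4 : ℕ) F (Icc a b))
    (h3 : ∀ x ∈ Ioo a b, iteratedDerivWithin 3 F (Icc a b) x = 0)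
    (hA : derivWithin F (Icc a b) a = 0) (hB : derivWithin F (Icc a b) b = 0) :
    ∀ x ∈ Icc a b, F x = F a := by
  have hs : UniqueDiffOn ℝ (Icc a b) := uniqueDiffOn_Icc hab
  have hF2cont : ContinuousOn (iteratedDerivWithin 2 F (Icc a b)) (Icc a b) :=
    hF.continuousOn_iteratedDerivWithin (by norm_num) hs
  have hF2const : ∀ x ∈ Icc a b,
      iteratedDerivWithin 2 F (Icc a b) x = iteratedDerivWithin 2 F (Icc a b) a := by
    apply const_on_Icc hab hF2cont
    intro x hx
    have h := hasDerivAt_itdw hx (k := 2) hF (by norm_num)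
    rwa [h3 x hx] at h
  set c := iteratedDerivWithin 2 F (Icc a b) a with hc_def
  have hG : ∀ x ∈ Icc a b, derivWithin F (Icc a b) x - c * x
      = derivWithin F (Icc a b) a - c * a := by
    apply const_on_Icc hab
      ((hF.continuousOn_derivWithin hs (by norm_num)).sub
        ((continuous_const.mul continuous_id).continuousOn))
    intro x hx
    have h1 := hasDerivAt_dw hx hF (by norm_num)
    rw [hF2const x (Ioo_subset_Icc_self hx)] at h1
    have h2 := h1.sub ((hasDerivAt_id x).const_mul c)
    simp only [mul_one, sub_self] at h2
    exact h2
  have hcb := hG b (right_mem_Icc.2 hab.le)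
  rw [hA, hB] at hcb
  have hc0 : c = 0 := by
    have h2 : c * (b - a) = 0 := by linarith
    rcases mul_eq_zero.1 h2 with h | h
    · exact h
    · exact absurd h (by intro h'; linarith)
  have hF1 : ∀ x ∈ Ioo a b, derivWithin F (Icc a b) x = 0 := by
    intro x hx
    have h := hG x (Ioo_subset_Icc_self hx)
    rw [hA, hc0] at h
    simpa using h
  exact const_of_derivWithin_zero' hab hF (by norm_num) hF1

set_option maxHeartbeats 1600000 in
/-- The characterization of positive steady states contained in Theorem 4.5 of the
paper: positive steady states of the capillary-driven two-phase thin film system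
with insoluble surfactant (with `R₃ = −σ₁ᶜ`, `S₃ = −σ₂ᶜ` and boundary conditions
`∂ₓf = ∂ₓg = ∂ₓΓ = 0`, `∂ₓ³f = ∂ₓ³g = 0` at `x = 0, L`) are constant. -/
theorem capillary_steady_states_constant
    (L : ℝ) (hL : 0 < L)
    (μ D σ₁c σ₂c : ℝ) (hμ : 0 < μ) (hD : 0 < D) (hσ₁c : 0 < σ₁c) (hσ₂c : 0 < σ₂c)
    (σ : ℝ → ℝ) (hσ : ContDiff ℝ 2 σ) (hσdec : StrictAnti σ)
    (f g Γ : ℝ → ℝ)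
    (hf : ContDiffOn ℝ 4 f (Icc 0 L))
    (hg : ContDiffOn ℝ 4 g (Icc 0 L))
    (hΓ : ContDiffOn ℝ 2 Γ (Icc 0 L))
    (hfpos : ∀ x ∈ Icc (0 : ℝ) L, 0 < f x)
    (hgpos : ∀ x ∈ Icc (0 : ℝ) L, 0 < g x)
    (hΓpos : ∀ x ∈ Icc (0 : ℝ) L, 0 < Γ x)
    (hflux_f : ∀ x ∈ Ioo (0 : ℝ) L,
      deriv (fun y => f y *
        ((-σ₁c) * (f y) ^ 2 / 3 * iteratedDeriv 3 f y
         + (-σ₂c) * μ * ((f y) ^ 2 / 3 + f y * g y / 2)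
            * iteratedDeriv 3 (fun ξ => f ξ + g ξ) y
         - μ * (f y / 2) * deriv (fun ξ => σ (Γ ξ)) y)) x = 0)
    (hflux_g : ∀ x ∈ Ioo (0 : ℝ) L,
      deriv (fun y => g y *
        ((-σ₁c) * (f y) ^ 2 / 2 * iteratedDeriv 3 f y
         + (-σ₂c) * ((g y) ^ 2 / 3 + μ * ((f y) ^ 2 / 2 + f y * g y))
            * iteratedDeriv 3 (fun ξ => f ξ + g ξ) y
         - (μ * f y + g y / 2) * deriv (fun ξ => σ (Γ ξ)) y)) x = 0)
    (hflux_Γ : ∀ x ∈ Ioo (0 : ℝ) L,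
      deriv (fun y => Γ y *
        ((-σ₁c) * (f y) ^ 2 / 2 * iteratedDeriv 3 f y
         + (-σ₂c) * ((g y) ^ 2 / 2 + μ * ((f y) ^ 2 / 2 + f y * g y))
            * iteratedDeriv 3 (fun ξ => f ξ + g ξ) y
         - (μ * f y + g y) * deriv (fun ξ => σ (Γ ξ)) y)
        + D * deriv Γ y) x = 0)
    (hbc : derivWithin f (Icc 0 L) 0 = 0 ∧ derivWithin f (Icc 0 L) L = 0 ∧
      derivWithin g (Icc 0 L) 0 = 0 ∧ derivWithin g (Icc 0 L) L = 0 ∧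
      derivWithin Γ (Icc 0 L) 0 = 0 ∧ derivWithin Γ (Icc 0 L) L = 0 ∧
      iteratedDerivWithin 3 f (Icc 0 L) 0 = 0 ∧ iteratedDerivWithin 3 f (Icc 0 L) L = 0 ∧
      iteratedDerivWithin 3 g (Icc 0 L) 0 = 0 ∧ iteratedDerivWithin 3 g (Icc 0 L) L = 0) :
    ∀ x ∈ Icc (0 : ℝ) L, f x = f 0 ∧ g x = g 0 ∧ Γ x = Γ 0 := by
  obtain ⟨hbf0, hbfL, hbg0, hbgL, hbΓ0, hbΓL, hb3f0, hb3fL, hb3g0, hb3gL⟩ := hbc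
  have hs : UniqueDiffOn ℝ (Icc (0:ℝ) L) := uniqueDiffOn_Icc hL
  have h0mem : (0:ℝ) ∈ Icc (0:ℝ) L := left_mem_Icc.2 hL.le
  have hf' : ContDiffOn ℝ ((4:ℕ) : WithTop ℕ∞) f (Icc 0 L) := by exact_mod_cast hf
  have hg' : ContDiffOn ℝ ((4:ℕ) : WithTop ℕ∞) g (Icc 0 L) := by exact_mod_cast hg
  have hΓ' : ContDiffOn ℝ ((2:ℕ) : WithTop ℕ∞) Γ (Icc 0 L) := by exact_mod_cast hΓ
  have hσ' : ContDiff ℝ ((2:ℕ) : WithTop ℕ∞) σ := by exact_mod_cast hσ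
  have hfg' : ContDiffOn ℝ ((4:ℕ) : WithTop ℕ∞) (fun ξ => f ξ + g ξ) (Icc 0 L) := hf'.add hg'
  have hSG : ContDiffOn ℝ ((2:ℕ) : WithTop ℕ∞) (fun ξ => σ (Γ ξ)) (Icc 0 L) :=
    hσ'.comp_contDiffOn hΓ'
  set F3 := iteratedDerivWithin 3 f (Icc (0:ℝ) L) with hF3def
  set G3 := iteratedDerivWithin 3 g (Icc (0:ℝ) L) with hG3def
  set FG3 := iteratedDerivWithin 3 (fun ξ => f ξ + g ξ) (Icc (0:ℝ) L) with hFG3def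
  set SG1 := derivWithin (fun ξ => σ (Γ ξ)) (Icc (0:ℝ) L) with hSG1def
  set G1 := derivWithin Γ (Icc (0:ℝ) L) with hG1def
  have hF3e : ∀ y ∈ Ioo (0:ℝ) L, F3 y = iteratedDeriv 3 f y := by
    intro y hy; rw [hF3def]; exact itdw_eq_itd hy 3 f
  have hFG3e : ∀ y ∈ Ioo (0:ℝ) L, FG3 y = iteratedDeriv 3 (fun ξ => f ξ + g ξ) y := by
    intro y hy; rw [hFG3def]; exact itdw_eq_itd hy 3 _
  have hSG1e : ∀ y ∈ Ioo (0:ℝ) L, SG1 y = deriv (fun ξ => σ (Γ ξ)) y := by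
    intro y hy; rw [hSG1def]; exact derivWithin_of_mem_nhds (Icc_mem_nhds hy.1 hy.2)
  have hG1e : ∀ y ∈ Ioo (0:ℝ) L, G1 y = deriv Γ y := by
    intro y hy; rw [hG1def]; exact derivWithin_of_mem_nhds (Icc_mem_nhds hy.1 hy.2)
  have hcf := hf'.continuousOn
  have hcg := hg'.continuousOn
  have hcΓ := hΓ'.continuousOn
  have hcF3 : ContinuousOn F3 (Icc 0 L) :=
    hf'.continuousOn_iteratedDerivWithin (by exact_mod_cast (by norm_num : (3:ℕ) ≤ 4)) hs
  have hcFG3 : ContinuousOn FG3 (Icc 0 L) :=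
    hfg'.continuousOn_iteratedDerivWithin (by exact_mod_cast (by norm_num : (3:ℕ) ≤ 4)) hs
  have hcSG1 : ContinuousOn SG1 (Icc 0 L) :=
    hSG.continuousOn_derivWithin hs (by exact_mod_cast (by norm_num : (1:ℕ) ≤ 2))
  have hcG1 : ContinuousOn G1 (Icc 0 L) :=
    hΓ'.continuousOn_derivWithin hs (by exact_mod_cast (by norm_num : (1:ℕ) ≤ 2))
  set Φ₁ : ℝ → ℝ := fun y => f y *
        ((-σ₁c) * (f y) ^ 2 / 3 * F3 y
         + (-σ₂c) * μ * ((f y) ^ 2 / 3 + f y * g y / 2) * FG3 y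
         - μ * (f y / 2) * SG1 y) with hΦ₁def
  set Φ₂ : ℝ → ℝ := fun y => g y *
        ((-σ₁c) * (f y) ^ 2 / 2 * F3 y
         + (-σ₂c) * ((g y) ^ 2 / 3 + μ * ((f y) ^ 2 / 2 + f y * g y)) * FG3 y
         - (μ * f y + g y / 2) * SG1 y) with hΦ₂def
  set Φ₃ : ℝ → ℝ := fun y => Γ y *
        ((-σ₁c) * (f y) ^ 2 / 2 * F3 y
         + (-σ₂c) * ((g y) ^ 2 / 2 + μ * ((f y) ^ 2 / 2 + f y * g y)) * FG3 y
         - (μ * f y + g y) * SG1 y) + D * G1 y with hΦ₃def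
  have hcΦ₁ : ContinuousOn Φ₁ (Icc 0 L) := by
    rw [hΦ₁def]; fun_prop
  have hcΦ₂ : ContinuousOn Φ₂ (Icc 0 L) := by
    rw [hΦ₂def]; fun_prop
  have hcΦ₃ : ContinuousOn Φ₃ (Icc 0 L) := by
    rw [hΦ₃def]; fun_prop
  have hder : ∀ x ∈ Ioo (0:ℝ) L,
      HasDerivAt Φ₁ 0 x ∧ HasDerivAt Φ₂ 0 x ∧ HasDerivAt Φ₃ 0 x := by
    intro x hx
    have hmem : Icc (0:ℝ) L ∈ 𝓝 x := Icc_mem_nhds hx.1 hx.2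
    have hdf : DifferentiableAt ℝ f x :=
      (hf'.differentiableOn (by norm_num)).differentiableAt hmem
    have hdg : DifferentiableAt ℝ g x :=
      (hg'.differentiableOn (by norm_num)).differentiableAt hmem
    have hdΓ : DifferentiableAt ℝ Γ x :=
      (hΓ'.differentiableOn (by norm_num)).differentiableAt hmem
    have hdF3 : DifferentiableAt ℝ F3 x :=
      (hasDerivAt_itdw hx (k := 3) hf' (by norm_num)).differentiableAt
    have hdFG3 : DifferentiableAt ℝ FG3 x :=
      (hasDerivAt_itdw hx (k := 3) hfg' (by norm_num)).differentiableAt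
    have hdSG1 : DifferentiableAt ℝ SG1 x :=
      (hasDerivAt_dw hx hSG (by norm_num)).differentiableAt
    have hdG1 : DifferentiableAt ℝ G1 x :=
      (hasDerivAt_dw hx hΓ' (by norm_num)).differentiableAt
    have hdΦ₁ : DifferentiableAt ℝ Φ₁ x := by rw [hΦ₁def]; fun_prop
    have hdΦ₂ : DifferentiableAt ℝ Φ₂ x := by rw [hΦ₂def]; fun_prop
    have hdΦ₃ : DifferentiableAt ℝ Φ₃ x := by rw [hΦ₃def]; fun_prop
    have hopen : Ioo (0:ℝ) L ∈ 𝓝 x := isOpen_Ioo.mem_nhds hx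
    have heq1 : Φ₁ =ᶠ[𝓝 x] (fun y => f y *
        ((-σ₁c) * (f y) ^ 2 / 3 * iteratedDeriv 3 f y
         + (-σ₂c) * μ * ((f y) ^ 2 / 3 + f y * g y / 2)
            * iteratedDeriv 3 (fun ξ => f ξ + g ξ) y
         - μ * (f y / 2) * deriv (fun ξ => σ (Γ ξ)) y)) := by
      filter_upwards [hopen] with y hy
      simp only [hΦ₁def]
      rw [hF3e y hy, hFG3e y hy, hSG1e y hy]
    have heq2 : Φ₂ =ᶠ[𝓝 x] (fun y => g y *
        ((-σ₁c) * (f y) ^ 2 / 2 * iteratedDeriv 3 f y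
         + (-σ₂c) * ((g y) ^ 2 / 3 + μ * ((f y) ^ 2 / 2 + f y * g y))
            * iteratedDeriv 3 (fun ξ => f ξ + g ξ) y
         - (μ * f y + g y / 2) * deriv (fun ξ => σ (Γ ξ)) y)) := by
      filter_upwards [hopen] with y hy
      simp only [hΦ₂def]
      rw [hF3e y hy, hFG3e y hy, hSG1e y hy]
    have heq3 : Φ₃ =ᶠ[𝓝 x] (fun y => Γ y *
        ((-σ₁c) * (f y) ^ 2 / 2 * iteratedDeriv 3 f y
         + (-σ₂c) * ((g y) ^ 2 / 2 + μ * ((f y) ^ 2 / 2 + f y * g y))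
            * iteratedDeriv 3 (fun ξ => f ξ + g ξ) y
         - (μ * f y + g y) * deriv (fun ξ => σ (Γ ξ)) y)
        + D * deriv Γ y) := by
      filter_upwards [hopen] with y hy
      simp only [hΦ₃def]
      rw [hF3e y hy, hFG3e y hy, hSG1e y hy, hG1e y hy]
    have hd1 : deriv Φ₁ x = 0 := by rw [heq1.deriv_eq]; exact hflux_f x hx
    have hd2 : deriv Φ₂ x = 0 := by rw [heq2.deriv_eq]; exact hflux_g x hx
    have hd3 : deriv Φ₃ x = 0 := by rw [heq3.deriv_eq]; exact hflux_Γ x hx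
    exact ⟨hd1 ▸ hdΦ₁.hasDerivAt, hd2 ▸ hdΦ₂.hasDerivAt, hd3 ▸ hdΦ₃.hasDerivAt⟩
  have hSG10 : SG1 0 = 0 := by
    rw [hSG1def]
    have h := derivWithin_comp (𝕜 := ℝ) (s' := univ) (h := Γ) (h₂ := σ) 0
      (((hσ'.differentiable (by norm_num)) (Γ 0)).differentiableWithinAt)
      ((hΓ'.differentiableOn (by norm_num)) 0 h0mem)
      (mapsTo_univ _ _)
    rw [show (fun ξ => σ (Γ ξ)) = σ ∘ Γ from rfl, h, ← hG1def, hbΓ0, mul_zero]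
  have hFG30 : FG3 0 = 0 := by
    rw [hFG3def, show (fun ξ => f ξ + g ξ) = f + g from rfl,
      iteratedDerivWithin_add (n := 3) h0mem hs
        ((hf'.of_le (by exact_mod_cast (by norm_num : (3:ℕ) ≤ 4))) 0 h0mem)
        ((hg'.of_le (by exact_mod_cast (by norm_num : (3:ℕ) ≤ 4))) 0 h0mem),
      ← hF3def, ← hG3def, hb3f0, hb3g0, add_zero]
  have hΦ₁0 : Φ₁ 0 = 0 := by
    simp only [hΦ₁def]; rw [hb3f0, hFG30, hSG10]; ring
  have hΦ₂0 : Φ₂ 0 = 0 := by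
    simp only [hΦ₂def]; rw [hb3f0, hFG30, hSG10]; ring
  have hΦ₃0 : Φ₃ 0 = 0 := by
    simp only [hΦ₃def]; rw [hb3f0, hFG30, hSG10, hbΓ0]; ring
  have hz1 : ∀ x ∈ Icc (0:ℝ) L, Φ₁ x = 0 := by
    intro x hx
    rw [const_on_Icc hL hcΦ₁ (fun y hy => (hder y hy).1) x hx, hΦ₁0]
  have hz2 : ∀ x ∈ Icc (0:ℝ) L, Φ₂ x = 0 := by
    intro x hx
    rw [const_on_Icc hL hcΦ₂ (fun y hy => (hder y hy).2.1) x hx, hΦ₂0]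
  have hz3 : ∀ x ∈ Icc (0:ℝ) L, Φ₃ x = 0 := by
    intro x hx
    rw [const_on_Icc hL hcΦ₃ (fun y hy => (hder y hy).2.2) x hx, hΦ₃0]
  have hzero : ∀ x ∈ Ioo (0:ℝ) L, G1 x = 0 ∧ F3 x = 0 ∧ FG3 x = 0 := by
    intro x hx
    have hxI : x ∈ Icc (0:ℝ) L := Ioo_subset_Icc_self hx
    have hmem : Icc (0:ℝ) L ∈ 𝓝 x := Icc_mem_nhds hx.1 hx.2
    have hFx := hfpos x hxI
    have hGx := hgpos x hxI
    have hCx := hΓpos x hxI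
    have hsgx : SG1 x = deriv σ (Γ x) * G1 x := by
      have hdΓ : DifferentiableAt ℝ Γ x :=
        (hΓ'.differentiableOn (by norm_num)).differentiableAt hmem
      have hdσ : DifferentiableAt ℝ σ (Γ x) :=
        (hσ'.differentiable (by norm_num)).differentiableAt
      rw [hSG1e x hx, show (fun ξ => σ (Γ ξ)) = σ ∘ Γ from rfl, deriv_comp x hdσ hdΓ,
        hG1e x hx]
    have hS : deriv σ (Γ x) ≤ 0 := by
      have hdσ : DifferentiableAt ℝ σ (Γ x) :=
        (hσ'.differentiable (by norm_num)).differentiableAt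
      exact deriv_nonpos_of_antitone hσdec.antitone hdσ.hasDerivAt
    have e1 : (-σ₁c) * (f x) ^ 2 / 3 * F3 x
         + (-σ₂c) * μ * ((f x) ^ 2 / 3 + f x * g x / 2) * FG3 x
         - μ * (f x / 2) * SG1 x = 0 := by
      have h := hz1 x hxI
      simp only [hΦ₁def] at h
      rcases mul_eq_zero.1 h with h' | h'
      · exact absurd h' (ne_of_gt hFx)
      · exact h'
    have e2 : (-σ₁c) * (f x) ^ 2 / 2 * F3 x
         + (-σ₂c) * ((g x) ^ 2 / 3 + μ * ((f x) ^ 2 / 2 + f x * g x)) * FG3 x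
         - (μ * f x + g x / 2) * SG1 x = 0 := by
      have h := hz2 x hxI
      simp only [hΦ₂def] at h
      rcases mul_eq_zero.1 h with h' | h'
      · exact absurd h' (ne_of_gt hGx)
      · exact h'
    have e3 : Γ x * ((-σ₁c) * (f x) ^ 2 / 2 * F3 x
         + (-σ₂c) * ((g x) ^ 2 / 2 + μ * ((f x) ^ 2 / 2 + f x * g x)) * FG3 x
         - (μ * f x + g x) * SG1 x) + D * G1 x = 0 := by
      have h := hz3 x hxI
      simp only [hΦ₃def] at h
      exact h
    rw [hsgx] at e1 e2 e3
    have key : G1 x * (Γ x * ((f x)^2 * (g x)^2 * (g x + μ * f x) / 36) * (-(deriv σ (Γ x)))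
        + ((f x)^2 * (g x)^2 / 9 + μ * (f x)^3 * g x / 12) * D) = 0 := by
      linear_combination (Γ x * ((f x)^2 * (g x)^2 / 12)) * e1
        + (Γ x * (-((f x)^2 * (g x)^2) / 6 - μ * (f x)^3 * g x / 12)) * e2
        + ((f x)^2 * (g x)^2 / 9 + μ * (f x)^3 * g x / 12) * e3
    have hKpos : 0 < Γ x * ((f x)^2 * (g x)^2 * (g x + μ * f x) / 36) * (-(deriv σ (Γ x)))
        + ((f x)^2 * (g x)^2 / 9 + μ * (f x)^3 * g x / 12) * D := by
      have h1 : 0 ≤ Γ x * ((f x)^2 * (g x)^2 * (g x + μ * f x) / 36) * (-(deriv σ (Γ x))) := by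
        apply mul_nonneg (mul_nonneg hCx.le _) (by linarith)
        have hpos : (0:ℝ) < g x + μ * f x := by nlinarith
        positivity
      have h2 : 0 < ((f x)^2 * (g x)^2 / 9 + μ * (f x)^3 * g x / 12) * D := by
        apply mul_pos _ hD
        have ha : (0:ℝ) < (f x)^2 * (g x)^2 / 9 :=
          div_pos (mul_pos (pow_pos hFx 2) (pow_pos hGx 2)) (by norm_num)
        have hb : (0:ℝ) < μ * (f x)^3 * g x / 12 :=
          div_pos (mul_pos (mul_pos hμ (pow_pos hFx 3)) hGx) (by norm_num)
        linarith
      linarith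
    have hW0 : G1 x = 0 := by
      rcases mul_eq_zero.1 key with h' | h'
      · exact h'
      · exact absurd h' (ne_of_gt hKpos)
    rw [hW0] at e1 e2
    have hA0 : F3 x = 0 := by
      have h3 : F3 x * (σ₁c * ((f x)^2 * (g x)^2 / 9 + μ * (f x)^3 * g x / 12)) = 0 := by
        linear_combination (-((g x)^2 / 3 + μ * ((f x)^2 / 2 + f x * g x))) * e1
          + (μ * ((f x)^2 / 3 + f x * g x / 2)) * e2
      rcases mul_eq_zero.1 h3 with h' | h'
      · exact h'
      · refine absurd h' (ne_of_gt ?_)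
        have ha : (0:ℝ) < (f x)^2 * (g x)^2 / 9 :=
          div_pos (mul_pos (pow_pos hFx 2) (pow_pos hGx 2)) (by norm_num)
        have hb : (0:ℝ) < μ * (f x)^3 * g x / 12 :=
          div_pos (mul_pos (mul_pos hμ (pow_pos hFx 3)) hGx) (by norm_num)
        have := mul_pos hσ₁c (by linarith : (0:ℝ) < (f x)^2 * (g x)^2 / 9 + μ * (f x)^3 * g x / 12)
        linarith
    have hB0 : FG3 x = 0 := by
      have h3 : FG3 x * (σ₂c * ((f x)^2 * (g x)^2 / 9 + μ * (f x)^3 * g x / 12)) = 0 := by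
        linear_combination ((f x)^2 / 2) * e1 + (-(f x)^2 / 3) * e2
      rcases mul_eq_zero.1 h3 with h' | h'
      · exact h'
      · refine absurd h' (ne_of_gt ?_)
        have ha : (0:ℝ) < (f x)^2 * (g x)^2 / 9 :=
          div_pos (mul_pos (pow_pos hFx 2) (pow_pos hGx 2)) (by norm_num)
        have hb : (0:ℝ) < μ * (f x)^3 * g x / 12 :=
          div_pos (mul_pos (mul_pos hμ (pow_pos hFx 3)) hGx) (by norm_num)
        have := mul_pos hσ₂c (by linarith : (0:ℝ) < (f x)^2 * (g x)^2 / 9 + μ * (f x)^3 * g x / 12)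
        linarith
    exact ⟨hW0, hA0, hB0⟩
  have hfc : ∀ x ∈ Icc (0:ℝ) L, f x = f 0 :=
    cubic_zero hL (by exact_mod_cast hf') (fun x hx => (hzero x hx).2.1) hbf0 hbfL
  have hfgBC0 : derivWithin (fun ξ => f ξ + g ξ) (Icc (0:ℝ) L) 0 = 0 := by
    rw [derivWithin_fun_add
      ((hf'.differentiableOn (by norm_num)) 0 h0mem)
      ((hg'.differentiableOn (by norm_num)) 0 h0mem),
      hbf0, hbg0, add_zero]
  have hLmem : L ∈ Icc (0:ℝ) L := right_mem_Icc.2 hL.le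
  have hfgBCL : derivWithin (fun ξ => f ξ + g ξ) (Icc (0:ℝ) L) L = 0 := by
    rw [derivWithin_fun_add
      ((hf'.differentiableOn (by norm_num)) L hLmem)
      ((hg'.differentiableOn (by norm_num)) L hLmem),
      hbfL, hbgL, add_zero]
  have hfgc : ∀ x ∈ Icc (0:ℝ) L, f x + g x = f 0 + g 0 :=
    cubic_zero hL (by exact_mod_cast hfg') (fun x hx => (hzero x hx).2.2) hfgBC0 hfgBCL
  have hΓc : ∀ x ∈ Icc (0:ℝ) L, Γ x = Γ 0 :=
    const_of_derivWithin_zero' hL (by exact_mod_cast hΓ')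
      (by norm_num) (fun x hx => (hzero x hx).1)
  intro x hx
  refine ⟨hfc x hx, ?_, hΓc x hx⟩
  have h1 := hfgc x hx
  have h2 := hfc x hx
  linarith
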